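/- For a graph F, τ(F) divides gcd(F), where τ(F) is the gcd of e(F[X]) over all subsets X ⊆ V(F) that are not C_4-supporting in F, and gcd(F) is the gcd of the vertex degrees of F. -/

import Mathlib

open Finset
open scoped Classical

/-- `X` is C₄-supporting in `F` if there are distinct `a, b ∈ X` and
`c, d ∉ X` with `ac, bd, cd ∈ E(F)`. -/
def C4Supporting {V : Type*} (F : SimpleGraph V) (X : Finset V) : Prop :=
  ∃ a ∈ X, ∃ b ∈ X, a ≠ b ∧ ∃ c d, c ∉ X ∧ d ∉ X ∧ F.Adj a c ∧ F.Adj b d ∧ F.Adj c d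

/-- `τ(F)`: the gcd of `e(F[X])` over all non-C₄-supporting subsets `X ⊆ V(F)`. -/
noncomputable def tau {V : Type*} [Fintype V] (F : SimpleGraph V) : ℕ :=
  (Finset.univ.filter (fun X : Finset V => ¬ C4Supporting F X)).gcd
    (fun X => ((F.edgeFinset.filter (fun e => ∀ x ∈ e, x ∈ X))).card)

lemma tau_dvd_aux {V : Type*} [Fintype V] (F : SimpleGraph V) (X : Finset V)
    (h : ¬ C4Supporting F X) :
    tau F ∣ (F.edgeFinset.filter (fun e => ∀ x ∈ e, x ∈ X)).card :=
  Finset.gcd_dvd (by simp [h])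


/-- `τ(F)` divides the gcd of the vertex degrees of `F`. -/
theorem stmt_8 {V : Type*} [Fintype V] (F : SimpleGraph V)
    (hF : F.edgeFinset.Nonempty) :
    tau F ∣ Finset.univ.gcd (fun v : V => F.degree v) := by
  refine Finset.dvd_gcd fun v _ => ?_
  -- univ is not supporting
  have h1 : ¬ C4Supporting F (Finset.univ : Finset V) := by
    rintro ⟨a, -, b, -, -, c, d, hc, -⟩
    exact hc (mem_univ c)
  have h2 : ¬ C4Supporting F (Finset.univ.erase v) := by
    rintro ⟨a, -, b, -, -, c, d, hc, hd, -, -, hcd⟩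
    have hc' : c = v := by
      by_contra h; exact hc (mem_erase.2 ⟨h, mem_univ c⟩)
    have hd' : d = v := by
      by_contra h; exact hd (mem_erase.2 ⟨h, mem_univ d⟩)
    exact F.irrefl (hc' ▸ hd' ▸ hcd)
  have d1 := tau_dvd_aux F _ h1
  have d2 := tau_dvd_aux F _ h2
  have e1 : (F.edgeFinset.filter (fun e => ∀ x ∈ e, x ∈ (Finset.univ : Finset V))).card
      = F.edgeFinset.card := by
    congr 1; apply filter_true_of_mem; intro e _; intro x _; exact mem_univ x
  have e2 : (F.edgeFinset.filter (fun e => ∀ x ∈ e, x ∈ Finset.univ.erase v)).card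
      + F.degree v = F.edgeFinset.card := by
    have hinc : F.degree v = (F.edgeFinset.filter (fun e => v ∈ e)).card := by
      rw [← F.card_incidenceFinset_eq_degree v]
      congr 1
      ext e
      simp [SimpleGraph.incidenceFinset, SimpleGraph.incidenceSet,
        SimpleGraph.mem_edgeFinset, and_comm]
      exact (F.mem_incidenceFinset (v := v) (e := e)).trans and_comm
    rw [hinc]
    have hfc : F.edgeFinset.filter (fun e => ∀ x ∈ e, x ∈ Finset.univ.erase v)
        = F.edgeFinset.filter (fun e => ¬ (v ∈ e)) := by
      refine Finset.filter_congr (fun e _ => ?_)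
      constructor
      · intro h hv
        exact absurd (h v hv) (by simp)
      · intro h x hx
        exact mem_erase.2 ⟨fun hxv => h (hxv ▸ hx), mem_univ x⟩
    rw [hfc, Nat.add_comm]
    exact Finset.card_filter_add_card_filter_not (fun e => v ∈ e)
  rw [e1] at d1
  rw [← e2] at d1
  exact (Nat.dvd_add_right d2).mp d1
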